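/- Let A be a deterministic finite automaton and T ⊆ 2^S a table such that no element of T is a terminal strongly connected component of A. Then L(A, T) is meagre (of first Baire category) in the Cantor space X^ω. -/

import Mathlib

open Set

/-- `w` is a finite prefix of the infinite word `ξ`. -/
def InfPrefix {X : Type*} (w : List X) (ξ : ℕ → X) : Prop :=
  ∀ i : Fin w.length, w.get i = ξ i.val

/-- The set of finite prefixes of elements of `F`. -/
def Pref {X : Type*} (F : Set (ℕ → X)) : Set (List X) :=
  {w | ∃ ξ ∈ F, InfPrefix w ξ}

/-- Concatenation of a finite word in front of an infinite word. -/
def wordCat {X : Type*} (w : List X) (ξ : ℕ → X) : ℕ → X :=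
  fun n => if h : n < w.length then w.get ⟨n, h⟩ else ξ (n - w.length)


/-- A deterministic automaton with initial state and transition function. -/
structure DetAuto (X S : Type*) where
  start : S
  step : S → X → S

/-- The extension of the transition function to finite words. -/
def DetAuto.run {X S : Type*} (A : DetAuto X S) (s : S) (w : List X) : S :=
  w.foldl A.step s

/-- The state reached after reading the first `n` letters of `ξ`. -/
def DetAuto.statesAt {X S : Type*} (A : DetAuto X S) (ξ : ℕ → X) (n : ℕ) : S :=
  A.run A.start (List.ofFn fun i : Fin n => ξ i.val)

/-- `Inf(A, ξ)`: the set of states visited infinitely often on input `ξ`. -/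
def AInf {X S : Type*} (A : DetAuto X S) (ξ : ℕ → X) : Set S :=
  {s | ∀ n : ℕ, ∃ m ≥ n, A.statesAt ξ m = s}

/-- Muller acceptance: `L(A, T)`. -/
def Lang {X S : Type*} (A : DetAuto X S) (T : Set (Set S)) : Set (ℕ → X) :=
  {ξ | AInf A ξ ∈ T}

/-- `LOOP_A`: the set of realizable infinity sets. -/
def Loops {X S : Type*} (A : DetAuto X S) : Set (Set S) :=
  {Z | ∃ ξ : ℕ → X, AInf A ξ = Z}

/-- Strongly connected components: the loops maximal w.r.t. inclusion, i.e.
any other loop is contained in them or disjoint from them. -/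
def IsSCC {X S : Type*} (A : DetAuto X S) (Z : Set S) : Prop :=
  Z ∈ Loops A ∧ ∀ Z' ∈ Loops A, Z' ⊆ Z ∨ Z' ∩ Z = ∅

/-- The relation `Z₁ ↦ Z₂`. -/
def ReachRel {X S : Type*} (A : DetAuto X S) (Z₁ Z₂ : Set S) : Prop :=
  Z₁ ≠ Z₂ ∧ ∃ s ∈ Z₁, ∃ w : List X, A.run s w ∈ Z₂

/-- Terminal strongly connected components. -/
def IsTerminalSCC {X S : Type*} (A : DetAuto X S) (Z : Set S) : Prop :=
  IsSCC A Z ∧ ∀ Z' : Set S, IsSCC A Z' → Z ≠ Z' → ¬ ReachRel A Z Z'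




namespace MeagreAux

variable {X S : Type*}

/-- the length-`b` segment of `ξ` starting at position `a`. -/
def seg (ξ : ℕ → X) (a b : ℕ) : List X := List.ofFn fun i : Fin b => ξ (a + i)

@[simp] lemma seg_length (ξ : ℕ → X) (a b : ℕ) : (seg ξ a b).length = b := by
  simp [seg]

@[simp] lemma seg_getElem (ξ : ℕ → X) (a b : ℕ) (i : ℕ) (h : i < (seg ξ a b).length) :
    (seg ξ a b)[i] = ξ (a + i) := by
  simp [seg]

@[simp] lemma seg_zero (ξ : ℕ → X) (a : ℕ) : seg ξ a 0 = [] := by simp [seg]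

lemma run_append (A : DetAuto X S) (s : S) (u v : List X) :
    A.run s (u ++ v) = A.run (A.run s u) v := List.foldl_append

lemma run_cons (A : DetAuto X S) (s : S) (x : X) (u : List X) :
    A.run s (x :: u) = A.run (A.step s x) u := rfl

@[simp] lemma run_nil (A : DetAuto X S) (s : S) : A.run s [] = s := rfl

@[simp] lemma run_singleton (A : DetAuto X S) (s : S) (x : X) : A.run s [x] = A.step s x := rfl

lemma statesAt_eq (A : DetAuto X S) (ξ : ℕ → X) (n : ℕ) :
    A.statesAt ξ n = A.run A.start (seg ξ 0 n) := by
  simp [DetAuto.statesAt, seg]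

lemma seg_add (ξ : ℕ → X) (a b c : ℕ) :
    seg ξ a (b + c) = seg ξ a b ++ seg ξ (a + b) c := by
  apply List.ext_getElem
  · simp
  · intro i h1 h2
    rcases Nat.lt_or_ge i b with h | h
    · rw [List.getElem_append_left (by simpa using h)]
      simp
    · rw [List.getElem_append_right (by simpa using h)]
      simp only [seg_getElem, seg_length]
      congr 1
      omega

lemma statesAt_add (A : DetAuto X S) (ξ : ℕ → X) (a b : ℕ) :
    A.statesAt ξ (a + b) = A.run (A.statesAt ξ a) (seg ξ a b) := by
  rw [statesAt_eq, statesAt_eq, seg_add, run_append]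
  simp

lemma statesAt_congr (A : DetAuto X S) {ξ η : ℕ → X} {n : ℕ}
    (h : ∀ i < n, ξ i = η i) : A.statesAt ξ n = A.statesAt η n := by
  unfold DetAuto.statesAt
  congr 1
  apply List.ext_getElem (by simp)
  intro i h1 h2
  simp only [List.getElem_ofFn]
  exact h _ (by simpa using h1)

lemma seg_take (ξ : ℕ → X) (a b j : ℕ) (h : j ≤ b) :
    (seg ξ a b).take j = seg ξ a j := by
  apply List.ext_getElem
  · simp [h]
  · intro i h1 h2
    simp [List.getElem_take]

lemma seg_wordCat_left (w : List X) (η : ℕ → X) :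
    seg (wordCat w η) 0 w.length = w := by
  apply List.ext_getElem (by simp)
  intro i h1 h2
  simp only [seg_getElem, Nat.zero_add]
  simp [wordCat, h2]

lemma wordCat_lt (w : List X) (η : ℕ → X) {i : ℕ} (h : i < w.length) :
    wordCat w η i = w[i] := by simp [wordCat, h]

lemma wordCat_ge (w : List X) (η : ℕ → X) (j : ℕ) :
    wordCat w η (w.length + j) = η j := by simp [wordCat]

lemma statesAt_wordCat (A : DetAuto X S) (w : List X) (η : ℕ → X) (n : ℕ) :
    A.statesAt (wordCat w η) (w.length + n) = A.run (A.run A.start w) (seg η 0 n) := by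
  rw [statesAt_add, statesAt_eq, seg_wordCat_left]
  congr 1
  apply List.ext_getElem (by simp)
  intro i h1 h2
  simpa using wordCat_ge w η i

end MeagreAux

namespace MeagreAux

variable {X S : Type*}

/-- States along a cycle word `c` based at `z`. -/
def cycStates (A : DetAuto X S) (z : S) (c : List X) : Set S :=
  {t | ∃ j < c.length, A.run z (c.take j) = t}

lemma mem_cycStates_self (A : DetAuto X S) (z : S) {c : List X} (hc : c ≠ []) :
    z ∈ cycStates A z c :=
  ⟨0, List.length_pos_iff.mpr hc, rfl⟩

lemma cycStates_append (A : DetAuto X S) (z : S) {c1 : List X} (c2 : List X)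
    (h1 : A.run z c1 = z) :
    cycStates A z (c1 ++ c2) = cycStates A z c1 ∪ cycStates A z c2 := by
  ext t
  constructor
  · rintro ⟨j, hj, rfl⟩
    rw [List.take_append] at *
    rcases Nat.lt_or_ge j c1.length with h | h
    · left
      rw [Nat.sub_eq_zero_of_le (le_of_lt h)]
      simp
      exact ⟨j, h, rfl⟩
    · right
      rw [List.take_of_length_le h, run_append, h1]
      refine ⟨j - c1.length, ?_, rfl⟩
      simp at hj
      omega
  · rintro (⟨j, hj, rfl⟩ | ⟨j, hj, rfl⟩)
    · refine ⟨j, by simp; omega, ?_⟩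
      rw [List.take_append, Nat.sub_eq_zero_of_le (le_of_lt hj)]
      simp
    · refine ⟨c1.length + j, by simp; omega, ?_⟩
      rw [List.take_append, List.take_of_length_le (by omega),
        run_append, h1]
      congr 2
      omega

/-- The cycle states of a reachable cycle form a realizable infinity set. -/
lemma cycStates_mem_loops (A : DetAuto X S) {z : S} {p c : List X}
    (hp : A.run A.start p = z) (hc : c ≠ []) (hcyc : A.run z c = z) :
    cycStates A z c ∈ Loops A := by
  have hlen : 0 < c.length := List.length_pos_iff.mpr hc
  set η : ℕ → X := fun n => c.get ⟨n % c.length, Nat.mod_lt _ hlen⟩ with hη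
  -- segments of η of length multiples
  have hseg : ∀ q r, r ≤ c.length → seg η (q * c.length) r = c.take r := by
    intro q r hr
    apply List.ext_getElem (by simp [hr])
    intro i h1 h2
    simp only [seg_getElem, List.getElem_take]
    have : (q * c.length + i) % c.length = i := by
      rw [Nat.add_comm, Nat.add_mul_mod_self_right]
      exact Nat.mod_eq_of_lt (by simp at h1; omega)
    simp [hη, List.get_eq_getElem, this]
  have hper : ∀ q, A.run z (seg η 0 (q * c.length)) = z := by
    intro q
    induction q with
    | zero => simp
    | succ q ih =>
      have : (q + 1) * c.length = q * c.length + c.length := by ring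
      rw [this, seg_add, run_append, Nat.zero_add, ih, hseg q c.length le_rfl,
        List.take_length, hcyc]
  have hrun : ∀ m, A.run z (seg η 0 m) = A.run z (c.take (m % c.length)) := by
    intro m
    have hm : m = (m / c.length) * c.length + m % c.length := by
      rw [Nat.mul_comm]; exact (Nat.div_add_mod m c.length).symm
    conv_lhs => rw [hm]
    rw [seg_add, run_append, Nat.zero_add, hper,
      hseg _ _ (le_of_lt (Nat.mod_lt _ hlen))]
  refine ⟨wordCat p η, ?_⟩
  have hstates : ∀ m, A.statesAt (wordCat p η) (p.length + m)
      = A.run z (c.take (m % c.length)) := by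
    intro m
    rw [statesAt_wordCat, hp, hrun]
  ext t
  constructor
  · intro ht
    obtain ⟨m, hm, hmt⟩ := ht p.length
    obtain ⟨m', rfl⟩ := Nat.exists_eq_add_of_le hm
    rw [hstates] at hmt
    exact ⟨m' % c.length, Nat.mod_lt _ hlen, hmt⟩
  · rintro ⟨j, hj, rfl⟩
    intro n
    refine ⟨p.length + (n * c.length + j), ?_, ?_⟩
    · have : n ≤ n * c.length := Nat.le_mul_of_pos_right n hlen
      omega
    · rw [hstates]
      have h2 : (n * c.length + j) % c.length = j := by
        rw [Nat.add_comm, Nat.add_mul_mod_self_right]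
        exact Nat.mod_eq_of_lt hj
      rw [h2]

end MeagreAux

namespace MeagreAux

variable {X S : Type*} [Finite S]

lemma aInf_nonempty (A : DetAuto X S) (ξ : ℕ → X) : (AInf A ξ).Nonempty := by
  obtain ⟨s, hs⟩ := Finite.exists_infinite_fiber (fun n => A.statesAt ξ n)
  refine ⟨s, fun n => ?_⟩
  by_contra h
  push_neg at h
  have : ((fun n => A.statesAt ξ n) ⁻¹' {s}) ⊆ Set.Iio n := by
    intro m hm
    simp only [Set.mem_preimage, Set.mem_singleton_iff] at hm
    by_contra hge
    exact h m (by simpa [Set.mem_Iio] using hge) hm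
  exact (Set.infinite_coe_iff.mp hs) ((Set.finite_Iio n).subset this)

lemma eventually_mem_aInf (A : DetAuto X S) (ξ : ℕ → X) :
    ∃ N, ∀ n ≥ N, A.statesAt ξ n ∈ AInf A ξ := by
  have hfin := Fintype.ofFinite S
  have h : ∀ s : S, ∃ n, s ∉ AInf A ξ → ∀ m ≥ n, A.statesAt ξ m ≠ s := by
    intro s
    by_cases hs : s ∈ AInf A ξ
    · exact ⟨0, fun h => absurd hs h⟩
    · have : ¬ ∀ n : ℕ, ∃ m ≥ n, A.statesAt ξ m = s := hs
      push_neg at this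
      obtain ⟨n, hn⟩ := this
      exact ⟨n, fun _ => hn⟩
  choose f hf using h
  refine ⟨Finset.univ.sup f, fun n hn => ?_⟩
  by_contra hbad
  exact hf _ hbad n (le_trans (Finset.le_sup (Finset.mem_univ _)) hn) rfl

/-- Extraction: every state of `AInf A ξ` is reachable, and carries a covering
cycle whose cycle states are exactly `AInf A ξ`. -/
lemma exists_cover_cycle (A : DetAuto X S) {ξ : ℕ → X} {t : S} (ht : t ∈ AInf A ξ) :
    ∃ p c, A.run A.start p = t ∧ c ≠ [] ∧ A.run t c = t ∧ cycStates A t c = AInf A ξ := by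
  have hfin := Fintype.ofFinite S
  obtain ⟨N, hN⟩ := eventually_mem_aInf A ξ
  obtain ⟨n1, hn1ge, hn1⟩ := ht N
  have hcov : ∀ y : S, ∃ m, y ∈ AInf A ξ → (n1 + 1 ≤ m ∧ A.statesAt ξ m = y) := by
    intro y
    by_cases hy : y ∈ AInf A ξ
    · obtain ⟨m, hm, hm2⟩ := hy (n1 + 1)
      exact ⟨m, fun _ => ⟨hm, hm2⟩⟩
    · exact ⟨0, fun h => absurd h hy⟩
  choose g hg using hcov
  set M := Finset.univ.sup g with hM
  obtain ⟨n2, hn2ge, hn2⟩ := ht (max (M + 1) (n1 + 1))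
  have hn2M : M + 1 ≤ n2 := le_trans (le_max_left _ _) hn2ge
  have hn2n1 : n1 + 1 ≤ n2 := le_trans (le_max_right _ _) hn2ge
  refine ⟨seg ξ 0 n1, seg ξ n1 (n2 - n1), by rw [← statesAt_eq]; exact hn1, ?_, ?_, ?_⟩
  · intro h
    have := congrArg List.length h
    simp at this
    omega
  · have : A.run t ((seg ξ n1 (n2 - n1)).take (n2 - n1)) = A.statesAt ξ n2 := by
      rw [seg_take _ _ _ _ le_rfl, ← hn1, ← statesAt_add]
      congr 1
      omega
    rwa [List.take_of_length_le (by simp), hn2] at this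
  · have key : ∀ j ≤ n2 - n1, A.run t ((seg ξ n1 (n2 - n1)).take j) = A.statesAt ξ (n1 + j) := by
      intro j hj
      rw [seg_take _ _ _ _ hj, ← hn1, ← statesAt_add]
    ext y
    constructor
    · rintro ⟨j, hj, rfl⟩
      rw [key j (by simpa using le_of_lt hj)]
      exact hN _ (by omega)
    · intro hy
      obtain ⟨hm1, hm2⟩ := hg y hy
      have hgy : g y ≤ M := Finset.le_sup (Finset.mem_univ y)
      refine ⟨g y - n1, by simp; omega, ?_⟩
      rw [key _ (by omega)]
      rw [show n1 + (g y - n1) = g y by omega, hm2]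

end MeagreAux

namespace MeagreAux

variable {X S : Type*} [Finite S]

lemma loop_nonempty {A : DetAuto X S} {Z : Set S} (hZ : Z ∈ Loops A) : Z.Nonempty := by
  obtain ⟨ξ, rfl⟩ := hZ; exact aInf_nonempty A ξ

/-- Connectivity inside a loop. -/
lemma loop_connect {A : DetAuto X S} {Z : Set S} (hZ : Z ∈ Loops A) {s t : S}
    (hs : s ∈ Z) (ht : t ∈ Z) : ∃ u, A.run s u = t := by
  obtain ⟨ξ, rfl⟩ := hZ
  obtain ⟨p, c, _, _, _, hcyc⟩ := exists_cover_cycle A hs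
  rw [← hcyc] at ht
  obtain ⟨j, _, hj⟩ := ht
  exact ⟨c.take j, hj⟩

lemma loop_reachable {A : DetAuto X S} {Z : Set S} (hZ : Z ∈ Loops A) {z : S}
    (hz : z ∈ Z) : ∃ p, A.run A.start p = z := by
  obtain ⟨ξ, rfl⟩ := hZ
  obtain ⟨p, c, hp, _⟩ := exists_cover_cycle A hz
  exact ⟨p, hp⟩

lemma loops_union {A : DetAuto X S} {Z1 Z2 : Set S} (h1 : Z1 ∈ Loops A) (h2 : Z2 ∈ Loops A)
    {z : S} (hz1 : z ∈ Z1) (hz2 : z ∈ Z2) : Z1 ∪ Z2 ∈ Loops A := by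
  obtain ⟨ξ1, rfl⟩ := h1
  obtain ⟨ξ2, rfl⟩ := h2
  obtain ⟨p1, c1, hp1, hc1ne, hc1cyc, hc1⟩ := exists_cover_cycle A hz1
  obtain ⟨p2, c2, hp2, hc2ne, hc2cyc, hc2⟩ := exists_cover_cycle A hz2
  have := cycStates_mem_loops A hp1 (List.append_ne_nil_of_left_ne_nil hc1ne _) (by rw [run_append, hc1cyc, hc2cyc])
  rwa [cycStates_append A z c2 hc1cyc, hc1, hc2] at this

/-- Every loop is contained in an SCC. -/
lemma exists_scc_of_loop {A : DetAuto X S} {Z : Set S} (hZ : Z ∈ Loops A) :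
    ∃ C, IsSCC A C ∧ Z ⊆ C := by
  have hfin : ({L | L ∈ Loops A ∧ Z ⊆ L} : Set (Set S)).Finite := Set.toFinite _
  obtain ⟨C, hCmem, hCmax⟩ := Set.Finite.exists_maximalFor id _ hfin ⟨Z, hZ, subset_rfl⟩
  refine ⟨C, ⟨hCmem.1, fun L hL => ?_⟩, hCmem.2⟩
  by_cases hd : L ∩ C = ∅
  · exact Or.inr hd
  · left
    obtain ⟨z, hzL, hzC⟩ := Set.nonempty_iff_ne_empty.mpr hd
    have hun : L ∪ C ∈ Loops A := loops_union hL hCmem.1 hzL hzC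
    have := hCmax (j := L ∪ C) ⟨hun, hCmem.2.trans subset_union_right⟩ subset_union_right
    simp only [id] at this
    exact subset_union_left.trans this

omit [Finite S] in
lemma scc_disjoint {A : DetAuto X S} {Z1 Z2 : Set S} (h1 : IsSCC A Z1) (h2 : IsSCC A Z2)
    (hne : Z1 ≠ Z2) : Z1 ∩ Z2 = ∅ := by
  rcases h1.2 Z2 h2.1 with h | h
  · rcases h2.2 Z1 h1.1 with h' | h'
    · exact absurd (Set.Subset.antisymm h' h) hne
    · exact h'
  · rwa [Set.inter_comm]

/-- Any reachable cycle through a point of an SCC stays in the SCC. -/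
lemma scc_cycle_absorb {A : DetAuto X S} {C : Set S} (hC : IsSCC A C) {z : S} (hz : z ∈ C)
    {d : List X} (hcyc : A.run z d = z) :
    cycStates A z d ⊆ C := by
  have hCl := hC.1
  obtain ⟨ξ, hξ⟩ := hCl
  have hz' : z ∈ AInf A ξ := by rw [hξ]; exact hz
  obtain ⟨p', cC, hp', hcCne, hcCcyc, hcC⟩ := exists_cover_cycle A hz'
  have hL : cycStates A z (cC ++ d) ∈ Loops A :=
    cycStates_mem_loops A hp' (List.append_ne_nil_of_left_ne_nil hcCne _) (by rw [run_append, hcCcyc, hcyc])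
  rw [cycStates_append A z d hcCcyc, hcC, hξ] at hL
  rcases hC.2 _ hL with h | h
  · exact (subset_union_right).trans h
  · exfalso
    have : z ∈ (C ∪ cycStates A z d) ∩ C := ⟨Or.inl hz, hz⟩
    rw [h] at this
    exact this

end MeagreAux

namespace MeagreAux

variable {X S : Type*} [Finite S]

/-- A terminal SCC is closed under transitions. -/
lemma terminal_trap [Nonempty X] {A : DetAuto X S} {C : Set S} (hC : IsTerminalSCC A C)
    {z : S} (hz : z ∈ C) (x : X) : A.step z x ∈ C := by
  obtain ⟨p, hp⟩ := loop_reachable hC.1.1 hz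
  set t := A.step z x with htdef
  have hpt : A.run A.start (p ++ [x]) = t := by rw [run_append, hp, run_singleton]
  set ξt := wordCat (p ++ [x]) (fun _ => Classical.arbitrary X) with hξt
  obtain ⟨l, hl⟩ := aInf_nonempty A ξt
  -- l is reachable from t
  obtain ⟨m, hmge, hm⟩ := hl (p ++ [x]).length
  obtain ⟨m', rfl⟩ := Nat.exists_eq_add_of_le hmge
  have hrun_tl : A.run t (seg (fun _ => Classical.arbitrary X) 0 m') = l := by
    rw [← hpt, ← statesAt_wordCat, ← hξt, hm]
  set u := seg (fun _ : ℕ => Classical.arbitrary X) 0 m' with hu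
  obtain ⟨C', hC', hLC'⟩ := exists_scc_of_loop (⟨ξt, rfl⟩ : AInf A ξt ∈ Loops A)
  by_cases hcc : C' = C
  · -- l ∈ C; connect back to z and absorb the cycle
    have hlC : l ∈ C := hcc ▸ hLC' hl
    obtain ⟨u2, hu2⟩ := loop_connect hC.1.1 hlC hz
    set d := x :: (u ++ u2) with hd
    have hdcyc : A.run z d = z := by
      rw [hd, run_cons, ← htdef, run_append, hrun_tl, hu2]
    have habs := scc_cycle_absorb hC.1 hz hdcyc
    by_cases hlen : 1 < d.length
    · have : t ∈ cycStates A z d := ⟨1, hlen, by rw [hd]; simp [← htdef]⟩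
      exact habs this
    · have he : u ++ u2 = [] := by
        have h1 : d.length = 1 + (u ++ u2).length := by simp [hd]; omega
        have h2 : (u ++ u2).length = 0 := by omega
        exact List.length_eq_zero_iff.mp h2
      have ht2 : t = z := by
        have h3 : A.run t (u ++ u2) = z := by rw [run_append, hrun_tl, hu2]
        rwa [he, run_nil] at h3
      rwa [ht2]
  · exfalso
    refine hC.2 C' hC' (Ne.symm hcc) ⟨Ne.symm hcc, z, hz, x :: u, ?_⟩
    rw [run_cons, ← htdef, hrun_tl]
    exact hLC' hl

lemma terminal_trap_run [Nonempty X] {A : DetAuto X S} {C : Set S} (hC : IsTerminalSCC A C)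
    {z : S} (hz : z ∈ C) (w : List X) : A.run z w ∈ C := by
  induction w generalizing z with
  | nil => exact hz
  | cons x w ih => rw [run_cons]; exact ih (terminal_trap hC hz x)

/-- From every reachable state some terminal SCC is reachable. -/
lemma reach_terminal [Nonempty X] (A : DetAuto X S) {s : S} {w : List X}
    (hw : A.run A.start w = s) :
    ∃ v C, IsTerminalSCC A C ∧ A.run s v ∈ C := by
  -- first reach some SCC
  set ξs := wordCat w (fun _ => Classical.arbitrary X) with hξs
  obtain ⟨z0, hz0⟩ := aInf_nonempty A ξs
  obtain ⟨m, hmge, hm⟩ := hz0 w.length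
  obtain ⟨m', rfl⟩ := Nat.exists_eq_add_of_le hmge
  have hv0 : A.run s (seg (fun _ => Classical.arbitrary X) 0 m') = z0 := by
    rw [← hw, ← statesAt_wordCat, ← hξs, hm]
  obtain ⟨C0, hC0, hLC0⟩ := exists_scc_of_loop (⟨ξs, rfl⟩ : AInf A ξs ∈ Loops A)
  have hz0C0 : z0 ∈ C0 := hLC0 hz0
  -- descent on the size of the reachable set
  have main : ∀ n : ℕ, ∀ Z : Set S, ∀ z : S, ∀ v : List X, IsSCC A Z → z ∈ Z →
      A.run s v = z → ({t | ∃ u, A.run z u = t} : Set S).ncard ≤ n →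
      ∃ v C, IsTerminalSCC A C ∧ A.run s v ∈ C := by
    intro n
    induction n using Nat.strong_induction_on with
    | _ n IH =>
      intro Z z v hZ hz hv hcard
      by_cases hterm : IsTerminalSCC A Z
      · exact ⟨v, Z, hterm, hv ▸ hz⟩
      · have : ∃ Z', IsSCC A Z' ∧ Z ≠ Z' ∧ ReachRel A Z Z' := by
          by_contra hno
          push_neg at hno
          exact hterm ⟨hZ, fun Z' h1 h2 => hno Z' h1 h2⟩
        obtain ⟨Z', hZ', hneZ, -, z1, hz1Z, w1, hw1⟩ := this
        set z' := A.run z1 w1 with hz'def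
        obtain ⟨u0, hu0⟩ := loop_connect hZ.1 hz hz1Z
        have hreachz : ∃ p, A.run A.start p = z := loop_reachable hZ.1 hz
        obtain ⟨p, hp⟩ := hreachz
        -- z ∉ Reach z'
        have hznot : ¬ ∃ u2, A.run z' u2 = z := by
          rintro ⟨u2, hu2⟩
          have hdis := scc_disjoint hZ hZ' hneZ
          by_cases hem : u0 ++ w1 = []
          · have : z = z' := by rw [hz'def, ← hu0, ← run_append, hem]; rfl
            have : z ∈ Z ∩ Z' := ⟨hz, this ▸ hw1⟩
            rw [hdis] at this; exact this
          · set d := (u0 ++ w1) ++ u2 with hd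
            have hdcyc : A.run z d = z := by
              rw [hd, run_append, run_append, hu0, ← hz'def, hu2]
            have habs := scc_cycle_absorb hZ hz hdcyc
            by_cases hu2e : u2 = []
            · have : z' = z := by rw [← hu2, hu2e]; rfl
              have : z ∈ Z ∩ Z' := ⟨hz, this ▸ hw1⟩
              rw [hdis] at this; exact this
            · have hlen : (u0 ++ w1).length < d.length := by
                rw [hd]
                simp only [List.length_append]
                have := List.length_pos_iff.mpr hu2e
                omega
              have hmem : z' ∈ cycStates A z d :=
                ⟨(u0 ++ w1).length, hlen, by
                  rw [hd, List.take_left, run_append, hu0, hz'def]⟩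
              have : z' ∈ Z ∩ Z' := ⟨habs hmem, hw1⟩
              rw [hdis] at this; exact this
        -- strict decrease
        have hsub : ({t | ∃ u, A.run z' u = t} : Set S) ⊂ {t | ∃ u, A.run z u = t} := by
          constructor
          · rintro t ⟨u, rfl⟩
            exact ⟨(u0 ++ w1) ++ u, by rw [run_append, run_append, hu0, ← hz'def]⟩
          · intro hcon
            exact hznot (hcon ⟨[], rfl⟩)
        have hlt : ({t | ∃ u, A.run z' u = t} : Set S).ncard
            < ({t | ∃ u, A.run z u = t} : Set S).ncard :=
          Set.ncard_lt_ncard hsub (Set.toFinite _)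
        exact IH _ (by omega) Z' z' (v ++ (u0 ++ w1)) hZ' hw1
          (by rw [run_append, run_append, hv, hu0, hz'def]) le_rfl
  exact main _ C0 z0 _ hC0 hz0C0 hv0 le_rfl

end MeagreAux

namespace MeagreAux

variable {X S : Type*} [TopologicalSpace X] [DiscreteTopology X]

lemma isOpen_statesAt (A : DetAuto X S) (P : S → Prop) (n : ℕ) :
    IsOpen {ξ : ℕ → X | P (A.statesAt ξ n)} := by
  rw [isOpen_iff_mem_nhds]
  intro ξ hξ
  have hmem : (Set.Iio n).pi (fun i => ({ξ i} : Set X)) ∈ nhds ξ :=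
    set_pi_mem_nhds (Set.finite_Iio n)
      (fun i _ => IsOpen.mem_nhds (isOpen_discrete _) rfl)
  refine Filter.mem_of_superset hmem ?_
  intro η hη
  have : A.statesAt η n = A.statesAt ξ n :=
    statesAt_congr A (fun i hi => hη i (Set.mem_Iio.mpr hi))
  simpa [this] using hξ

lemma isClosed_statesAt (A : DetAuto X S) (P : S → Prop) (n : ℕ) :
    IsClosed {ξ : ℕ → X | P (A.statesAt ξ n)} := by
  rw [← isOpen_compl_iff]
  have : {ξ : ℕ → X | P (A.statesAt ξ n)}ᶜ = {ξ : ℕ → X | ¬ P (A.statesAt ξ n)} := rfl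
  rw [this]
  exact isOpen_statesAt A (fun s => ¬ P s) n

lemma exists_cylinder_of_mem_nhds {U : Set (ℕ → X)} {ξ : ℕ → X} (h : U ∈ nhds ξ) :
    ∃ n : ℕ, ∀ η : ℕ → X, (∀ i < n, η i = ξ i) → η ∈ U := by
  rw [nhds_pi, Filter.mem_pi] at h
  obtain ⟨I, hIfin, t, ht, hsub⟩ := h
  rcases hIfin.bddAbove with ⟨b, hb⟩
  refine ⟨b + 1, fun η hη => ?_⟩
  apply hsub
  intro i hi
  rw [hη i (Nat.lt_succ_of_le (hb hi))]
  exact mem_of_mem_nhds (ht i)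

end MeagreAux

namespace MeagreAux

variable {X S : Type*} [TopologicalSpace X] [DiscreteTopology X] [Finite S]

/-- Bad set of type Q: eventually trapped in the terminal SCC of `z` but avoiding `z`. -/
def QSet (A : DetAuto X S) (z : S) (k : ℕ) : Set (ℕ → X) :=
  {ξ | ∃ C, IsTerminalSCC A C ∧ z ∈ C ∧ A.statesAt ξ k ∈ C} ∩
    ⋂ n : ℕ, {ξ | k ≤ n → A.statesAt ξ n ≠ z}

/-- Bad set of type R: never visiting any terminal SCC. -/
def RSet (A : DetAuto X S) : Set (ℕ → X) :=
  ⋂ n : ℕ, {ξ | ∀ C, IsTerminalSCC A C → A.statesAt ξ n ∉ C}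

lemma isClosed_QSet (A : DetAuto X S) (z : S) (k : ℕ) : IsClosed (QSet A z k) :=
  IsClosed.inter (isClosed_statesAt A (fun s => ∃ C, IsTerminalSCC A C ∧ z ∈ C ∧ s ∈ C) k)
    (isClosed_iInter fun n => isClosed_statesAt A (fun s => k ≤ n → s ≠ z) n)

lemma isClosed_RSet (A : DetAuto X S) : IsClosed (RSet A) :=
  isClosed_iInter fun n => isClosed_statesAt A (fun s => ∀ C, IsTerminalSCC A C → s ∉ C) n

lemma isNowhereDense_QSet [Nonempty X] (A : DetAuto X S) (z : S) (k : ℕ) :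
    IsNowhereDense (QSet A z k) := by
  rw [(isClosed_QSet A z k).isNowhereDense_iff]
  rw [Set.eq_empty_iff_forall_notMem]
  intro ξ hξ
  have hQ : ξ ∈ QSet A z k := interior_subset hξ
  obtain ⟨⟨C, hC, hzC, hkC⟩, havoid⟩ := hQ
  rw [Set.mem_iInter] at havoid
  obtain ⟨n0, hn0⟩ := exists_cylinder_of_mem_nhds (mem_interior_iff_mem_nhds.mp hξ)
  set m := max n0 k with hm
  have hmC : A.statesAt ξ m ∈ C := by
    have : m = k + (m - k) := by omega
    rw [this, statesAt_add]
    exact terminal_trap_run hC hkC _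
  obtain ⟨u, hu⟩ := loop_connect hC.1.1 hmC hzC
  set η := wordCat (seg ξ 0 m ++ u) (fun _ => Classical.arbitrary X) with hη
  have hagree : ∀ i < n0, η i = ξ i := by
    intro i hi
    have him : i < (seg ξ 0 m ++ u).length := by
      simp only [List.length_append, seg_length]
      omega
    rw [hη, wordCat_lt _ _ him, List.getElem_append_left (by simp; omega)]
    simp
  have hηQ : η ∈ QSet A z k := hn0 η hagree
  have hstate : A.statesAt η ((seg ξ 0 m ++ u).length) = z := by
    have h0 : (seg ξ 0 m ++ u).length + 0 = (seg ξ 0 m ++ u).length := rfl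
    rw [← h0, hη, statesAt_wordCat, seg_zero, run_nil, run_append, ← statesAt_eq, hu]
  have hge : k ≤ (seg ξ 0 m ++ u).length := by
    simp only [List.length_append, seg_length]
    omega
  have h2 := hηQ.2
  rw [Set.mem_iInter] at h2
  exact h2 _ hge hstate

lemma isNowhereDense_RSet [Nonempty X] (A : DetAuto X S) :
    IsNowhereDense (RSet A) := by
  rw [(isClosed_RSet A).isNowhereDense_iff]
  rw [Set.eq_empty_iff_forall_notMem]
  intro ξ hξ
  obtain ⟨n0, hn0⟩ := exists_cylinder_of_mem_nhds (mem_interior_iff_mem_nhds.mp hξ)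
  obtain ⟨v, C, hC, hvC⟩ := reach_terminal A (by rw [← statesAt_eq] : A.run A.start (seg ξ 0 n0) = A.statesAt ξ n0)
  set η := wordCat (seg ξ 0 n0 ++ v) (fun _ => Classical.arbitrary X) with hη
  have hagree : ∀ i < n0, η i = ξ i := by
    intro i hi
    have him : i < (seg ξ 0 n0 ++ v).length := by
      simp only [List.length_append, seg_length]
      omega
    rw [hη, wordCat_lt _ _ him, List.getElem_append_left (by simp; omega)]
    simp
  have hηR : η ∈ RSet A := hn0 η hagree
  have hstate : A.statesAt η ((seg ξ 0 n0 ++ v).length) ∈ C := by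
    have h0 : (seg ξ 0 n0 ++ v).length + 0 = (seg ξ 0 n0 ++ v).length := rfl
    rw [← h0, hη, statesAt_wordCat, seg_zero, run_nil, run_append, ← statesAt_eq]
    exact hvC
  rw [RSet, Set.mem_iInter] at hηR
  exact hηR _ C hC hstate

end MeagreAux

namespace MeagreAux

lemma isMeagre_iUnion' {α ι : Type*} [TopologicalSpace α] [Countable ι] {s : ι → Set α}
    (hs : ∀ i, IsMeagre (s i)) : IsMeagre (⋃ i, s i) := by
  rw [IsMeagre, Set.compl_iUnion]
  exact countable_iInter_mem.mpr hs

lemma isMeagre_of_isNowhereDense {α : Type*} [TopologicalSpace α] {s : Set α}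
    (h : IsNowhereDense s) : IsMeagre s :=
  isMeagre_iff_countable_union_isNowhereDense.mpr
    ⟨{s}, by simpa using h, Set.countable_singleton s, by simp⟩

lemma isMeagre_union {α : Type*} [TopologicalSpace α] {s t : Set α}
    (hs : IsMeagre s) (ht : IsMeagre t) : IsMeagre (s ∪ t) := by
  rw [IsMeagre, Set.compl_union]
  exact Filter.inter_mem hs ht

end MeagreAux


open MeagreAux

/-- If no element of the table T is a terminal SCC then L(A,T) is meagre. -/
theorem lang_meagre {X S : Type*} [Fintype X] [Fintype S]
    [TopologicalSpace X] [DiscreteTopology X]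
    (A : DetAuto X S) (T : Set (Set S))
    (hT : ∀ Z ∈ T, ¬ IsTerminalSCC A Z) :
    IsMeagre (Lang A T) := by
  by_cases hX : Nonempty X
  · have hsub : Lang A T ⊆ RSet A ∪ ⋃ zk : S × ℕ, QSet A zk.1 zk.2 := by
      intro ξ hξ
      have hnt : ¬ IsTerminalSCC A (AInf A ξ) := hT _ hξ
      by_cases hcase : ∃ k C, IsTerminalSCC A C ∧ A.statesAt ξ k ∈ C
      · obtain ⟨k0, C, hC, hk0⟩ := hcase
        have ht : ∀ n, k0 ≤ n → A.statesAt ξ n ∈ C := by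
          intro n hn
          rw [show n = k0 + (n - k0) by omega, statesAt_add]
          exact terminal_trap_run hC hk0 _
        have hsubC : AInf A ξ ⊆ C := by
          rintro s hs
          obtain ⟨m, hm, rfl⟩ := hs k0
          exact ht m hm
        have hneC : AInf A ξ ≠ C := fun he => hnt (he ▸ hC)
        obtain ⟨z, hzC, hzn⟩ :=
          Set.exists_of_ssubset (HasSubset.Subset.ssubset_of_ne hsubC hneC)
        have hzn' : ∃ n1, ∀ m ≥ n1, A.statesAt ξ m ≠ z := by
          have : ¬ ∀ n : ℕ, ∃ m ≥ n, A.statesAt ξ m = z := hzn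
          push_neg at this
          exact this
        obtain ⟨n1, hn1⟩ := hzn'
        right
        rw [Set.mem_iUnion]
        refine ⟨(z, max k0 n1), ⟨⟨C, hC, hzC, ht _ (le_max_left _ _)⟩, ?_⟩⟩
        rw [Set.mem_iInter]
        intro n hn
        exact hn1 n (le_trans (le_max_right _ _) hn)
      · push_neg at hcase
        left
        rw [RSet, Set.mem_iInter]
        exact fun n C hC => hcase n C hC
    refine IsMeagre.mono hsub ?_
    refine isMeagre_union (isMeagre_of_isNowhereDense (isNowhereDense_RSet A)) (isMeagre_iUnion' ?_)
    exact fun zk => isMeagre_of_isNowhereDense (isNowhereDense_QSet A zk.1 zk.2)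
  · have hempty : IsEmpty (ℕ → X) := ⟨fun f => (not_nonempty_iff.mp hX).false (f 0)⟩
    rw [Set.eq_empty_of_isEmpty (Lang A T)]
    exact IsMeagre.empty
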